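/- The exponential generating function for the number of permutations of [n] avoiding both generalized patterns 12-3 and 21-3 is e^{x + x²/2}. -/

import Mathlib

/-- `π` contains an occurrence of `12-3`: indices `i`, `j` with `i + 1 < j`
and `π i < π (i+1) < π j`. -/
def Occ12_3 {n : ℕ} (π : Equiv.Perm (Fin n)) : Prop :=
  ∃ i j : Fin n, ∃ hi : (i : ℕ) + 1 < n,
    (i : ℕ) + 1 < (j : ℕ) ∧ π i < π ⟨(i : ℕ) + 1, hi⟩ ∧ π ⟨(i : ℕ) + 1, hi⟩ < π j

/-- `π` contains an occurrence of `21-3`: indices `i`, `j` with `i + 1 < j`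
and `π (i+1) < π i < π j`. -/
def Occ21_3 {n : ℕ} (π : Equiv.Perm (Fin n)) : Prop :=
  ∃ i j : Fin n, ∃ hi : (i : ℕ) + 1 < n,
    (i : ℕ) + 1 < (j : ℕ) ∧ π ⟨(i : ℕ) + 1, hi⟩ < π i ∧ π i < π j

/-- `a(n)`: the number of permutations of `[n]` avoiding both `12-3` and `21-3`. -/
noncomputable def a12_21_3 (n : ℕ) : ℕ :=
  Nat.card {π : Equiv.Perm (Fin n) // ¬ Occ12_3 π ∧ ¬ Occ21_3 π}

/-- The exponential `Σ_{m≥0} Sᵐ/m!` of a power series `S` (with zero constant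
term this is the usual formal exponential). -/
noncomputable def psExp (S : PowerSeries ℚ) : PowerSeries ℚ :=
  PowerSeries.mk fun n => ∑ m ∈ Finset.range (n + 1),
    PowerSeries.coeff (R := ℚ) n (S ^ m) / (Nat.factorial m)

open Finset

/-- local avoidance condition -/
def Avoids {n : ℕ} (π : Equiv.Perm (Fin n)) : Prop :=
  ∀ i : ℕ, (h : i + 2 < n) →
    π ⟨i+2, h⟩ < π ⟨i, by omega⟩ ∨ π ⟨i+2, h⟩ < π ⟨i+1, by omega⟩

lemma avoids_global {n : ℕ} {π : Equiv.Perm (Fin n)} (hA : Avoids π) :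
    ∀ d i : ℕ, (hj : i + 2 + d < n) →
      π ⟨i+2+d, hj⟩ < π ⟨i, by omega⟩ ∨ π ⟨i+2+d, hj⟩ < π ⟨i+1, by omega⟩ := by
  intro d
  induction d with
  | zero => exact fun i hj => hA i hj
  | succ d ih =>
    intro i hj
    have h1 : (i+1) + 2 + d < n := by omega
    have hfin : (⟨(i+1)+2+d, h1⟩ : Fin n) = ⟨i+2+(d+1), hj⟩ :=
      Fin.ext (by simp only [Fin.val_mk]; omega)
    have A := ih (i+1) h1
    rw [hfin] at A
    have e : (⟨i+1+1, by omega⟩ : Fin n) = ⟨i+2, by omega⟩ := rfl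
    rw [e] at A
    have B := hA i (by omega)
    rcases A with A | A
    · exact Or.inr A
    · rcases B with B | B
      · exact Or.inl (lt_trans A B)
      · exact Or.inr (lt_trans A B)

lemma avoids_iff {n : ℕ} (π : Equiv.Perm (Fin n)) :
    (¬ Occ12_3 π ∧ ¬ Occ21_3 π) ↔ Avoids π := by
  constructor
  · rintro ⟨h1, h2⟩ i h
    by_contra hc
    push_neg at hc
    obtain ⟨hc1, hc2⟩ := hc
    have hne02 : π ⟨i, by omega⟩ ≠ π ⟨i+2, h⟩ := fun he => by
      have := π.injective he; simp [Fin.ext_iff] at this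
    have hne12 : π ⟨i+1, by omega⟩ ≠ π ⟨i+2, h⟩ := fun he => by
      have := π.injective he; simp [Fin.ext_iff] at this
    have hne01 : π ⟨i, by omega⟩ ≠ π ⟨i+1, by omega⟩ := fun he => by
      have := π.injective he; simp [Fin.ext_iff] at this
    have h02 : π ⟨i, by omega⟩ < π ⟨i+2, h⟩ := lt_of_le_of_ne hc1 hne02
    have h12 : π ⟨i+1, by omega⟩ < π ⟨i+2, h⟩ := lt_of_le_of_ne hc2 hne12
    rcases lt_or_gt_of_ne hne01 with hlt | hgt
    · exact h1 ⟨⟨i, by omega⟩, ⟨i+2, h⟩, by simp only [Fin.val_mk]; omega,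
        by simp only [Fin.val_mk]; omega, hlt, h12⟩
    · exact h2 ⟨⟨i, by omega⟩, ⟨i+2, h⟩, by simp only [Fin.val_mk]; omega,
        by simp only [Fin.val_mk]; omega, hgt, h02⟩
  · intro hA
    constructor
    · rintro ⟨i, j, hi, hij, hab, hbj⟩
      have hd : (i : ℕ) + 2 + ((j : ℕ) - (i : ℕ) - 2) < n := by have := j.isLt; omega
      have key := avoids_global hA ((j : ℕ) - (i : ℕ) - 2) i hd
      have hfin : (⟨(i:ℕ)+2+((j:ℕ)-(i:ℕ)-2), hd⟩ : Fin n) = j :=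
        Fin.ext (by simp only [Fin.val_mk]; omega)
      rw [hfin] at key
      have hfi : (⟨(i:ℕ), by omega⟩ : Fin n) = i := Fin.ext rfl
      rw [hfi] at key
      rcases key with k | k
      · exact absurd (lt_trans (lt_trans hab hbj) k) (lt_irrefl _)
      · exact absurd (lt_trans hbj k) (lt_irrefl _)
    · rintro ⟨i, j, hi, hij, hab, hbj⟩
      have hd : (i : ℕ) + 2 + ((j : ℕ) - (i : ℕ) - 2) < n := by have := j.isLt; omega
      have key := avoids_global hA ((j : ℕ) - (i : ℕ) - 2) i hd
      have hfin : (⟨(i:ℕ)+2+((j:ℕ)-(i:ℕ)-2), hd⟩ : Fin n) = j :=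
        Fin.ext (by simp only [Fin.val_mk]; omega)
      rw [hfin] at key
      have hfi : (⟨(i:ℕ), by omega⟩ : Fin n) = i := Fin.ext rfl
      rw [hfi] at key
      rcases key with k | k
      · exact absurd (lt_trans hbj k) (lt_irrefl _)
      · exact absurd (lt_trans (lt_trans hab hbj) k) (lt_irrefl _)
-- recurrence machinery
open Equiv

lemma avoids_max_pos {n : ℕ} {π : Equiv.Perm (Fin (n+2))} (hA : Avoids π) {j : Fin (n+2)}
    (hj : π j = Fin.last (n+1)) : (j : ℕ) < 2 := by
  by_contra hc
  push_neg at hc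
  have h2 : (j:ℕ) - 2 + 2 < n + 2 := by have := j.isLt; omega
  have key := hA ((j:ℕ) - 2) h2
  have hfin : (⟨(j:ℕ)-2+2, h2⟩ : Fin (n+2)) = j := Fin.ext (by simp only [Fin.val_mk]; omega)
  rw [hfin, hj] at key
  rcases key with key | key
  · exact absurd key (not_lt.2 (Fin.le_last _))
  · exact absurd key (not_lt.2 (Fin.le_last _))

lemma avoids_one_eq_last {n : ℕ} {π : Equiv.Perm (Fin (n+2))} (hA : Avoids π)
    (h0 : π 0 ≠ Fin.last (n+1)) : π 1 = Fin.last (n+1) := by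
  have hj : π (π.symm (Fin.last (n+1))) = Fin.last (n+1) := π.apply_symm_apply _
  have h2 := avoids_max_pos hA hj
  have hne : π.symm (Fin.last (n+1)) ≠ 0 := by
    intro h; exact h0 (by rw [← h]; exact hj)
  have he : π.symm (Fin.last (n+1)) = 1 := by
    apply Fin.ext
    have h3 := Fin.val_ne_of_ne hne
    simp only [Fin.val_zero, Fin.val_one] at h3 ⊢
    omega
  rw [← he]; exact hj

/-! ### The equivalence for `π 0 = last` -/

noncomputable def fA {n : ℕ} (π : Equiv.Perm (Fin (n+2))) (h0 : π 0 = Fin.last (n+1)) :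
    Equiv.Perm (Fin (n+1)) :=
  Equiv.ofBijective
    (fun i => (π i.succ).castPred (by
      rw [← h0]
      exact fun he => Fin.succ_ne_zero i (π.injective he)))
    (Finite.injective_iff_bijective.1 (fun a b hab => by
      have h1 : π a.succ = π b.succ := by
        have h2 := congrArg Fin.castSucc hab
        rwa [Fin.castSucc_castPred, Fin.castSucc_castPred] at h2
      exact Fin.succ_injective _ (π.injective h1)))

lemma fA_val {n : ℕ} (π : Equiv.Perm (Fin (n+2))) (h0 : π 0 = Fin.last (n+1))
    (i : Fin (n+1)) : ((fA π h0 i : Fin (n+1)) : ℕ) = ((π i.succ : Fin (n+2)) : ℕ) := rfl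

lemma avoids_fA {n : ℕ} {π : Equiv.Perm (Fin (n+2))} (hA : Avoids π)
    (h0 : π 0 = Fin.last (n+1)) : Avoids (fA π h0) := by
  intro i h
  have key := hA (i+1) (by omega)
  refine Or.imp (fun hlt => ?_) (fun hlt => ?_) key
  · rw [Fin.lt_def, fA_val, fA_val]
    have e1 : ((⟨i+2, h⟩ : Fin (n+1)).succ) = ⟨i+1+2, by omega⟩ :=
      Fin.ext (by simp only [Fin.val_succ, Fin.val_mk]; try omega)
    have e2 : ((⟨i, by omega⟩ : Fin (n+1)).succ : Fin (n+2)) = ⟨i+1, by omega⟩ :=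
      Fin.ext (by simp only [Fin.val_succ, Fin.val_mk])
    rw [e1, e2]
    exact Fin.lt_def.1 hlt
  · rw [Fin.lt_def, fA_val, fA_val]
    have e1 : ((⟨i+2, h⟩ : Fin (n+1)).succ) = ⟨i+1+2, by omega⟩ :=
      Fin.ext (by simp only [Fin.val_succ, Fin.val_mk]; try omega)
    have e2 : ((⟨i+1, by omega⟩ : Fin (n+1)).succ : Fin (n+2)) = ⟨i+1+1, by omega⟩ :=
      Fin.ext (by simp only [Fin.val_succ, Fin.val_mk])
    rw [e1, e2]
    exact Fin.lt_def.1 hlt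

def gAfun {n : ℕ} (σ : Equiv.Perm (Fin (n+1))) (j : Fin (n+2)) : Fin (n+2) :=
  if h : (j : ℕ) = 0 then Fin.last (n+1)
  else (σ ⟨(j:ℕ)-1, by have := j.isLt; omega⟩).castSucc

noncomputable def gA {n : ℕ} (σ : Equiv.Perm (Fin (n+1))) : Equiv.Perm (Fin (n+2)) :=
  Equiv.ofBijective (gAfun σ)
    (Finite.injective_iff_bijective.1 (fun a b hab => by
      unfold gAfun at hab
      split_ifs at hab with ha hb hb
      · exact Fin.ext (by omega)
      · exact absurd hab.symm (ne_of_lt (Fin.castSucc_lt_last _))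
      · exact absurd hab (ne_of_lt (Fin.castSucc_lt_last _))
      · have h2 := σ.injective (Fin.castSucc_injective _ hab)
        have h3 := congrArg Fin.val h2
        simp only [Fin.val_mk] at h3
        exact Fin.ext (by omega)))

lemma gA_apply {n : ℕ} (σ : Equiv.Perm (Fin (n+1))) (j : Fin (n+2)) :
    gA σ j = gAfun σ j := rfl

lemma gA_zero {n : ℕ} (σ : Equiv.Perm (Fin (n+1))) : gA σ 0 = Fin.last (n+1) := by
  rw [gA_apply]; unfold gAfun; rw [dif_pos (Fin.val_zero _)]

lemma avoids_gA {n : ℕ} (σ : Equiv.Perm (Fin (n+1))) (hσ : Avoids σ) : Avoids (gA σ) := by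
  intro i h
  match i with
  | 0 =>
    left
    show gAfun σ ⟨2, h⟩ < gAfun σ ⟨0, by omega⟩
    unfold gAfun
    rw [dif_neg (by simp only [Fin.val_mk]; omega), dif_pos (by simp only [Fin.val_mk])]
    exact Fin.castSucc_lt_last _
  | (k+1) =>
    have key := hσ k (by omega)
    refine Or.imp (fun hlt => ?_) (fun hlt => ?_) key
    · exact Fin.castSucc_lt_castSucc_iff.2 hlt
    · exact Fin.castSucc_lt_castSucc_iff.2 hlt

noncomputable def eqA (n : ℕ) :
    {π : Equiv.Perm (Fin (n+2)) // Avoids π ∧ π 0 = Fin.last (n+1)} ≃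
    {σ : Equiv.Perm (Fin (n+1)) // Avoids σ} where
  toFun x := ⟨fA x.1 x.2.2, avoids_fA x.2.1 x.2.2⟩
  invFun y := ⟨gA y.1, avoids_gA y.1 y.2, gA_zero y.1⟩
  left_inv x := by
    obtain ⟨π, hA, h0⟩ := x
    apply Subtype.ext
    apply Equiv.ext
    intro j
    show gA (fA π h0) j = π j
    rw [gA_apply]
    unfold gAfun
    split_ifs with hj
    · rw [show j = 0 from Fin.ext (by rw [Fin.val_zero]; exact hj)]
      exact h0.symm
    · apply Fin.ext
      rw [Fin.coe_castSucc, fA_val]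
      exact congrArg (fun t => ((π t : Fin (n+2)) : ℕ))
        (Fin.ext (by simp only [Fin.val_succ, Fin.val_mk]; try omega))
  right_inv y := by
    obtain ⟨σ, hσ⟩ := y
    apply Subtype.ext
    apply Equiv.ext
    intro i
    show fA (gA σ) (gA_zero σ) i = σ i
    apply Fin.ext
    rw [fA_val, gA_apply]
    unfold gAfun
    rw [dif_neg (by rw [Fin.val_succ]; omega)]
    rw [Fin.coe_castSucc]
    exact congrArg (fun t => ((σ t : Fin (n+1)) : ℕ))
      (Fin.ext (by simp only [Fin.val_succ, Fin.val_mk]; try omega))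

/-! ### The equivalence for `π 1 = last` -/

def redu (u w : ℕ) : ℕ := if w < u then w else w - 1
def unredu (u t : ℕ) : ℕ := if t < u then t else t + 1

lemma redu_lt {u w m : ℕ} (hw : w ≤ m) (hu : u ≤ m) (hne : w ≠ u) : redu u w < m := by
  unfold redu; split_ifs <;> omega
lemma redu_lt_redu {u w1 w2 : ℕ} (h1 : w1 ≠ u) (h2 : w2 ≠ u) (h : w1 < w2) :
    redu u w1 < redu u w2 := by unfold redu; split_ifs <;> omega
lemma redu_inj {u w1 w2 : ℕ} (h1 : w1 ≠ u) (h2 : w2 ≠ u) (h : redu u w1 = redu u w2) :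
    w1 = w2 := by unfold redu at h; split_ifs at h <;> omega
lemma unredu_lt_unredu {u t1 t2 : ℕ} (h : t1 < t2) : unredu u t1 < unredu u t2 := by
  unfold unredu; split_ifs <;> omega
lemma unredu_inj {u t1 t2 : ℕ} (h : unredu u t1 = unredu u t2) : t1 = t2 := by
  unfold unredu at h; split_ifs at h <;> omega
lemma unredu_ne (u t : ℕ) : unredu u t ≠ u := by unfold unredu; split_ifs <;> omega
lemma unredu_le {u t n : ℕ} (h : t < n) : unredu u t ≤ n := by
  unfold unredu; split_ifs <;> omega
lemma unredu_lt2 {u t n : ℕ} (h : t < n) : unredu u t < n + 2 := by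
  unfold unredu; split_ifs <;> omega
lemma unredu_redu {u w : ℕ} (h : w ≠ u) : unredu u (redu u w) = w := by
  unfold redu unredu; split_ifs <;> omega
lemma redu_unredu (u t : ℕ) : redu u (unredu u t) = t := by
  unfold redu unredu; split_ifs <;> omega

lemma val_le_of_ne_one {n : ℕ} {π : Equiv.Perm (Fin (n+2))} (h1 : π 1 = Fin.last (n+1))
    {x : Fin (n+2)} (hx : x ≠ 1) : ((π x : Fin (n+2)) : ℕ) ≤ n := by
  have hne : π x ≠ Fin.last (n+1) := fun he => hx (π.injective (he.trans h1.symm))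
  have h2 := (π x).isLt
  have h3 : ((π x : Fin (n+2)) : ℕ) ≠ n + 1 := fun hv => hne (Fin.ext (by rw [hv, Fin.val_last]))
  omega

lemma val_ne_of_ne {n : ℕ} (π : Equiv.Perm (Fin n)) {x y : Fin n} (hxy : x ≠ y) :
    ((π x : Fin n) : ℕ) ≠ ((π y : Fin n) : ℕ) :=
  fun he => hxy (π.injective (Fin.ext he))

noncomputable def fB {n : ℕ} (π : Equiv.Perm (Fin (n+2))) (h1 : π 1 = Fin.last (n+1)) :
    Equiv.Perm (Fin n) :=
  Equiv.ofBijective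
    (fun i => (⟨redu ((π 0 : Fin (n+2)) : ℕ)
        ((π ⟨(i:ℕ)+2, by have := i.isLt; omega⟩ : Fin (n+2)) : ℕ), by
      refine redu_lt (val_le_of_ne_one h1 ?_) (val_le_of_ne_one h1 ?_) (val_ne_of_ne π ?_)
      · exact fun he => by
          have h := congrArg Fin.val he; simp only [Fin.val_mk, Fin.val_one] at h; omega
      · exact fun he => by
          have h := congrArg Fin.val he; rw [Fin.val_zero, Fin.val_one] at h; omega
      · exact fun he => by
          have h := congrArg Fin.val he; simp only [Fin.val_mk, Fin.val_zero] at h; omega⟩ : Fin n))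
    (Finite.injective_iff_bijective.1 (fun a b hab => by
      have h2 := congrArg Fin.val hab
      simp only [Fin.val_mk] at h2
      have h3 := redu_inj ?_ ?_ h2
      · have h4 := congrArg Fin.val (π.injective (Fin.ext h3))
        simp only [Fin.val_mk] at h4
        exact Fin.ext (by omega)
      · exact val_ne_of_ne π (fun he => by
          have h := congrArg Fin.val he; simp only [Fin.val_mk, Fin.val_zero] at h; omega)
      · exact val_ne_of_ne π (fun he => by
          have h := congrArg Fin.val he; simp only [Fin.val_mk, Fin.val_zero] at h; omega)))

lemma fB_val {n : ℕ} (π : Equiv.Perm (Fin (n+2))) (h1 : π 1 = Fin.last (n+1))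
    (i : Fin n) (hp : (i:ℕ)+2 < n+2) :
    ((fB π h1 i : Fin n) : ℕ) =
      redu ((π 0 : Fin (n+2)) : ℕ) ((π ⟨(i:ℕ)+2, hp⟩ : Fin (n+2)) : ℕ) := rfl

lemma avoids_fB {n : ℕ} {π : Equiv.Perm (Fin (n+2))} (hA : Avoids π)
    (h1 : π 1 = Fin.last (n+1)) : Avoids (fB π h1) := by
  intro i h
  have key := hA (i+2) (by omega)
  refine Or.imp (fun hlt => ?_) (fun hlt => ?_) key
  · rw [Fin.lt_def, fB_val π h1 _ (by simp only [Fin.val_mk]; omega),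
      fB_val π h1 _ (by simp only [Fin.val_mk]; omega)]
    refine redu_lt_redu ?_ ?_ ?_
    · exact val_ne_of_ne π (fun he => by
        have hh := congrArg Fin.val he; simp only [Fin.val_mk, Fin.val_zero] at hh; omega)
    · exact val_ne_of_ne π (fun he => by
        have hh := congrArg Fin.val he; simp only [Fin.val_mk, Fin.val_zero] at hh; omega)
    · exact Fin.lt_def.1 hlt
  · rw [Fin.lt_def, fB_val π h1 _ (by simp only [Fin.val_mk]; omega),
      fB_val π h1 _ (by simp only [Fin.val_mk]; omega)]
    refine redu_lt_redu ?_ ?_ ?_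
    · exact val_ne_of_ne π (fun he => by
        have hh := congrArg Fin.val he; simp only [Fin.val_mk, Fin.val_zero] at hh; omega)
    · exact val_ne_of_ne π (fun he => by
        have hh := congrArg Fin.val he; simp only [Fin.val_mk, Fin.val_zero] at hh; omega)
    · exact Fin.lt_def.1 hlt

def gBfun {n : ℕ} (v : Fin (n+1)) (τ : Equiv.Perm (Fin n)) (j : Fin (n+2)) : Fin (n+2) :=
  if h0 : (j : ℕ) = 0 then ⟨(v:ℕ), by have := v.isLt; omega⟩
  else if h1 : (j : ℕ) = 1 then Fin.last (n+1)
  else ⟨unredu (v:ℕ) ((τ ⟨(j:ℕ)-2, by have := j.isLt; omega⟩ : Fin n) : ℕ),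
    unredu_lt2 (Fin.is_lt _)⟩

noncomputable def gB {n : ℕ} (v : Fin (n+1)) (τ : Equiv.Perm (Fin n)) :
    Equiv.Perm (Fin (n+2)) :=
  Equiv.ofBijective (gBfun v τ)
    (Finite.injective_iff_bijective.1 (fun a b hab => by
      unfold gBfun at hab
      split_ifs at hab
      all_goals
        first
        | exact Fin.ext (by omega)
        | (have hv := congrArg Fin.val hab
           simp only [Fin.val_mk, Fin.val_last] at hv
           first
           | exact absurd hv (by have := v.isLt; omega)
           | exact absurd hv.symm (by have := v.isLt; omega)
           | exact absurd hv.symm (unredu_ne _ _)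
           | exact absurd hv (unredu_ne _ _)
           | exact absurd hv (ne_of_gt (Nat.lt_succ_of_le (unredu_le (Fin.is_lt _))))
           | exact absurd hv.symm (ne_of_gt (Nat.lt_succ_of_le (unredu_le (Fin.is_lt _))))
           | (have h5 := congrArg Fin.val (τ.injective (Fin.ext (unredu_inj hv)))
              simp only [Fin.val_mk] at h5
              exact Fin.ext (by omega)))))

lemma gB_apply {n : ℕ} (v : Fin (n+1)) (τ : Equiv.Perm (Fin n)) (j : Fin (n+2)) :
    gB v τ j = gBfun v τ j := rfl

lemma gB_zero_val {n : ℕ} (v : Fin (n+1)) (τ : Equiv.Perm (Fin n)) :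
    ((gB v τ 0 : Fin (n+2)) : ℕ) = (v : ℕ) := by
  rw [gB_apply]; unfold gBfun
  rw [dif_pos (Fin.val_zero _)]

lemma gB_one {n : ℕ} (v : Fin (n+1)) (τ : Equiv.Perm (Fin n)) :
    gB v τ 1 = Fin.last (n+1) := by
  rw [gB_apply]; unfold gBfun
  rw [dif_neg (by rw [Fin.val_one]; omega), dif_pos (Fin.val_one _)]

lemma gB_val_last {n : ℕ} (v : Fin (n+1)) (τ : Equiv.Perm (Fin n)) {jv : ℕ}
    (p : jv < n+2) (hj : jv = 1) : ((gB v τ ⟨jv, p⟩ : Fin (n+2)) : ℕ) = n+1 := by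
  subst hj
  rw [gB_apply]; unfold gBfun
  rw [dif_neg (by rw [Fin.val_mk]; omega), dif_pos (by rw [Fin.val_mk]), Fin.val_last]

lemma gB_val_le {n : ℕ} (v : Fin (n+1)) (τ : Equiv.Perm (Fin n)) {j : Fin (n+2)}
    (hj : (j : ℕ) ≠ 1) : ((gB v τ j : Fin (n+2)) : ℕ) ≤ n := by
  rw [gB_apply]; unfold gBfun
  by_cases h0 : (j : ℕ) = 0
  · rw [dif_pos h0, Fin.val_mk]; have := v.isLt; omega
  · rw [dif_neg h0, dif_neg hj, Fin.val_mk]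
    exact unredu_le (Fin.is_lt _)

lemma gB_val_else {n : ℕ} (v : Fin (n+1)) (τ : Equiv.Perm (Fin n)) {jv : ℕ}
    (p : jv < n+2) (h2 : 2 ≤ jv) (q : jv - 2 < n) :
    ((gB v τ ⟨jv, p⟩ : Fin (n+2)) : ℕ) = unredu (v:ℕ) ((τ ⟨jv-2, q⟩ : Fin n) : ℕ) := by
  rw [gB_apply]; unfold gBfun
  rw [dif_neg (by rw [Fin.val_mk]; omega), dif_neg (by rw [Fin.val_mk]; omega)]

lemma avoids_gB {n : ℕ} (v : Fin (n+1)) (τ : Equiv.Perm (Fin n)) (hτ : Avoids τ) :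
    Avoids (gB v τ) := by
  intro i h
  match i with
  | 0 =>
    right
    rw [Fin.lt_def, gB_val_last v τ _ rfl]
    exact Nat.lt_succ_of_le (gB_val_le v τ (by rw [Fin.val_mk]; omega))
  | 1 =>
    left
    rw [Fin.lt_def, gB_val_last v τ _ rfl]
    exact Nat.lt_succ_of_le (gB_val_le v τ (by rw [Fin.val_mk]; omega))
  | (k+2) =>
    have key := hτ k (by omega)
    refine Or.imp (fun hlt => ?_) (fun hlt => ?_) key
    · rw [Fin.lt_def, gB_val_else v τ h (by omega) (by omega),
        gB_val_else v τ (by omega) (by omega) (by omega)]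
      exact unredu_lt_unredu (Fin.lt_def.1 hlt)
    · rw [Fin.lt_def, gB_val_else v τ h (by omega) (by omega),
        gB_val_else v τ (by omega) (by omega) (by omega)]
      exact unredu_lt_unredu (Fin.lt_def.1 hlt)

noncomputable def eqB (n : ℕ) :
    {π : Equiv.Perm (Fin (n+2)) // Avoids π ∧ π 1 = Fin.last (n+1)} ≃
    (Fin (n+1) × {τ : Equiv.Perm (Fin n) // Avoids τ}) where
  toFun x := (⟨((x.1 0 : Fin (n+2)) : ℕ), by
      have hne : (0 : Fin (n+2)) ≠ 1 := fun he => by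
        have h := congrArg Fin.val he; rw [Fin.val_zero, Fin.val_one] at h; omega
      have := val_le_of_ne_one x.2.2 hne
      omega⟩,
    ⟨fB x.1 x.2.2, avoids_fB x.2.1 x.2.2⟩)
  invFun y := ⟨gB y.1 y.2.1, avoids_gB y.1 y.2.1 y.2.2, gB_one y.1 y.2.1⟩
  left_inv x := by
    obtain ⟨π, hA, h1⟩ := x
    apply Subtype.ext
    apply Equiv.ext
    intro j
    obtain ⟨jv, hjv⟩ := j
    show gB _ _ _ = _
    by_cases hj0 : jv = 0
    · subst hj0
      apply Fin.ext
      have e0 : (⟨0, hjv⟩ : Fin (n+2)) = 0 := Fin.ext (by rw [Fin.val_zero])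
      rw [e0]
      rfl
    · by_cases hj1 : jv = 1
      · subst hj1
        have e1 : (⟨1, hjv⟩ : Fin (n+2)) = 1 := Fin.ext (by rw [Fin.val_one])
        rw [e1, gB_one]
        exact h1.symm
      · apply Fin.ext
        rw [gB_val_else _ _ hjv (by omega) (by omega)]
        rw [fB_val π h1 _ (by rw [Fin.val_mk]; omega)]
        have e2 : (⟨jv, hjv⟩ : Fin (n+2)) = ⟨jv-2+2, by omega⟩ :=
          Fin.ext (by simp only [Fin.val_mk]; omega)
        rw [e2]
        refine unredu_redu ?_
        exact val_ne_of_ne π (fun he => by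
          have hh := congrArg Fin.val he
          simp only [Fin.val_mk, Fin.val_zero] at hh
          omega)
  right_inv y := by
    obtain ⟨v, τ, hτ⟩ := y
    refine Prod.ext ?_ ?_
    · apply Fin.ext
      show ((gB v τ 0 : Fin (n+2)) : ℕ) = (v : ℕ)
      exact gB_zero_val v τ
    · apply Subtype.ext
      apply Equiv.ext
      intro i
      apply Fin.ext
      show ((fB (gB v τ) (gB_one v τ) i : Fin n) : ℕ) = ((τ i : Fin n) : ℕ)
      rw [fB_val _ _ _ (by have := i.isLt; omega)]
      rw [gB_zero_val, gB_val_else v τ _ (by omega) (by omega)]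
      rw [redu_unredu]
      exact congrArg (fun t => ((τ t : Fin n) : ℕ)) (Fin.ext (by rw [Fin.val_mk]; omega))

/-! ### Counting -/

noncomputable def eqSplit (n : ℕ) :
    {π : Equiv.Perm (Fin (n+2)) // Avoids π} ≃
    ({π : Equiv.Perm (Fin (n+2)) // Avoids π ∧ π 0 = Fin.last (n+1)} ⊕
     {π : Equiv.Perm (Fin (n+2)) // Avoids π ∧ π 1 = Fin.last (n+1)}) :=
  ((Equiv.sumCompl (fun x : {π : Equiv.Perm (Fin (n+2)) // Avoids π} =>
      x.1 0 = Fin.last (n+1))).symm).trans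
    (Equiv.sumCongr
      (Equiv.subtypeSubtypeEquivSubtypeInter
        (fun π : Equiv.Perm (Fin (n+2)) => Avoids π)
        (fun π => π 0 = Fin.last (n+1)))
      ((Equiv.subtypeSubtypeEquivSubtypeInter
          (fun π : Equiv.Perm (Fin (n+2)) => Avoids π)
          (fun π => ¬ π 0 = Fin.last (n+1))).trans
        (Equiv.subtypeEquivRight
          (p := fun π : Equiv.Perm (Fin (n+2)) => Avoids π ∧ ¬ π 0 = Fin.last (n+1))
          (q := fun π : Equiv.Perm (Fin (n+2)) => Avoids π ∧ π 1 = Fin.last (n+1))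
          (fun π => by
          constructor
          · rintro ⟨hA, hne⟩
            exact ⟨hA, avoids_one_eq_last hA hne⟩
          · rintro ⟨hA, h1⟩
            refine ⟨hA, fun h0 => ?_⟩
            have h01 := π.injective (h0.trans h1.symm)
            have h := congrArg Fin.val h01
            rw [Fin.val_zero, Fin.val_one] at h
            omega))))

def invol : ℕ → ℕ
  | 0 => 1
  | 1 => 1
  | (n+2) => invol (n+1) + (n+1) * invol n

lemma card_avoids_rec (n : ℕ) :
    Nat.card {π : Equiv.Perm (Fin (n+2)) // Avoids π} =
      Nat.card {σ : Equiv.Perm (Fin (n+1)) // Avoids σ} +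
        (n+1) * Nat.card {τ : Equiv.Perm (Fin n) // Avoids τ} := by
  rw [Nat.card_congr (eqSplit n), Nat.card_sum, Nat.card_congr (eqA n),
    Nat.card_congr (eqB n), Nat.card_prod, Nat.card_eq_fintype_card (α := Fin (n+1)),
    Fintype.card_fin]

lemma card_avoids_small (n : ℕ) (hn : n ≤ 1) :
    Nat.card {π : Equiv.Perm (Fin n) // Avoids π} = 1 := by
  rw [Nat.card_eq_one_iff_unique]
  constructor
  · constructor
    intro a b
    apply Subtype.ext
    apply Equiv.ext
    intro x
    have hx := x.isLt
    interval_cases n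
    · exact absurd hx (by omega)
    · have h1 := (a.1 x).isLt
      have h2 := (b.1 x).isLt
      exact Fin.ext (by omega)
  · exact ⟨⟨1, fun i h => absurd h (by omega)⟩⟩

lemma a_eq_invol (n : ℕ) : a12_21_3 n = invol n := by
  have key : ∀ m, a12_21_3 m = Nat.card {π : Equiv.Perm (Fin m) // Avoids π} :=
    fun m => Nat.card_congr (Equiv.subtypeEquivRight (fun π => avoids_iff π))
  induction n using Nat.strong_induction_on with
  | _ n ih =>
    match n with
    | 0 => rw [key, card_avoids_small 0 (by omega)]; rfl
    | 1 => rw [key, card_avoids_small 1 (by omega)]; rfl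
    | (m+2) =>
      have h1 := ih (m+1) (by omega)
      have h0 := ih m (by omega)
      rw [key] at h1 h0 ⊢
      rw [card_avoids_rec m, h1, h0]
      rfl

/-! ### Power series side -/

noncomputable def hterm (n k : ℕ) : ℚ :=
  if 2*k ≤ n then ((2:ℚ)^k * (Nat.factorial k : ℚ) * (Nat.factorial (n - 2*k) : ℚ))⁻¹ else 0

noncomputable def gseq (n : ℕ) : ℚ := ∑ k ∈ Finset.range (n+1), hterm n k

lemma coeff_S_pow (m n : ℕ) :
    PowerSeries.coeff (R := ℚ) n ((PowerSeries.X + (2:ℚ)⁻¹ • (PowerSeries.X : PowerSeries ℚ)^2) ^ m) =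
    if m ≤ n ∧ n ≤ 2*m then ((2:ℚ)⁻¹)^(n-m) * (m.choose (n-m)) else 0 := by
  have hsm : (2:ℚ)⁻¹ • (PowerSeries.X : PowerSeries ℚ)^2
      = PowerSeries.C (R := ℚ) (2:ℚ)⁻¹ * PowerSeries.X^2 := by
    rw [PowerSeries.smul_eq_C_mul]
  rw [hsm, add_pow, map_sum]
  have step : ∀ k ∈ Finset.range (m+1),
      (PowerSeries.coeff (R := ℚ) n) ((PowerSeries.X : PowerSeries ℚ)^k *
          (PowerSeries.C (R := ℚ) (2:ℚ)⁻¹ * PowerSeries.X^2)^(m-k) * (m.choose k : PowerSeries ℚ))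
      = if k + 2*(m-k) = n then ((2:ℚ)⁻¹)^(m-k) * (m.choose k) else 0 := by
    intro k _
    rw [mul_pow, ← map_pow, ← pow_mul]
    rw [show (PowerSeries.X : PowerSeries ℚ)^k *
          (PowerSeries.C (R := ℚ) (((2:ℚ)⁻¹)^(m-k)) * PowerSeries.X^(2*(m-k))) *
          (m.choose k : PowerSeries ℚ)
        = PowerSeries.C (R := ℚ) (((2:ℚ)⁻¹)^(m-k)) * (m.choose k : PowerSeries ℚ) *
          PowerSeries.X^(k + 2*(m-k)) by rw [pow_add]; ring]
    rw [show ((m.choose k : ℕ) : PowerSeries ℚ) = PowerSeries.C (R := ℚ) ((m.choose k : ℕ) : ℚ) from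
      (map_natCast (PowerSeries.C (R := ℚ)) _).symm]
    rw [← map_mul, PowerSeries.coeff_C_mul, PowerSeries.coeff_X_pow]
    by_cases hx : n = k + 2*(m-k)
    · rw [if_pos hx, if_pos hx.symm, mul_one]
    · rw [if_neg hx, if_neg (fun hh => hx hh.symm), mul_zero]
  rw [Finset.sum_congr rfl step]
  by_cases hcond : m ≤ n ∧ n ≤ 2*m
  · rw [if_pos hcond]
    rw [Finset.sum_eq_single (2*m - n)]
    · rw [if_pos (by omega)]
      rw [show m - (2*m - n) = n - m by omega]
      rw [show (2*m - n) = m - (n - m) by omega, Nat.choose_symm (by omega)]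
    · intro k hk hne
      rw [if_neg (by simp only [Finset.mem_range] at hk; omega)]
    · intro hk
      exact absurd (Finset.mem_range.2 (by omega)) hk
  · rw [if_neg hcond]
    apply Finset.sum_eq_zero
    intro k hk
    rw [if_neg (by simp only [Finset.mem_range] at hk; omega)]

lemma coeff_psExp_eq (n : ℕ) :
    PowerSeries.coeff (R := ℚ) n (psExp (PowerSeries.X + (2:ℚ)⁻¹ • (PowerSeries.X : PowerSeries ℚ)^2))
      = gseq n := by
  unfold psExp
  rw [PowerSeries.coeff_mk]
  have e1 : ∀ m ∈ Finset.range (n+1),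
      PowerSeries.coeff (R := ℚ) n ((PowerSeries.X + (2:ℚ)⁻¹ • (PowerSeries.X : PowerSeries ℚ)^2)^m)
          / (Nat.factorial m : ℚ)
      = (if m ≤ n ∧ n ≤ 2*m then ((2:ℚ)⁻¹)^(n-m) * (m.choose (n-m)) else 0)
          / (Nat.factorial m : ℚ) :=
    fun m _ => by rw [coeff_S_pow]
  rw [Finset.sum_congr rfl e1, ← Finset.sum_range_reflect]
  unfold gseq
  apply Finset.sum_congr rfl
  intro k hk
  simp only [Finset.mem_range] at hk
  rw [show n + 1 - 1 - k = n - k by omega]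
  unfold hterm
  by_cases h2 : 2*k ≤ n
  · rw [if_pos (by omega), if_pos h2]
    rw [show n - (n - k) = k by omega]
    have hfact : ((n-k).factorial : ℚ)
        = ((n-k).choose k) * (Nat.factorial k : ℚ) * (Nat.factorial (n-2*k) : ℚ) := by
      have hnat := Nat.choose_mul_factorial_mul_factorial (show k ≤ n - k by omega)
      rw [show n - k - k = n - 2*k by omega] at hnat
      exact_mod_cast hnat.symm
    rw [hfact]
    have hc1 : ((n-k).choose k : ℚ) ≠ 0 := Nat.cast_ne_zero.2 (Nat.choose_pos (by omega)).ne'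
    have hc2 : (Nat.factorial k : ℚ) ≠ 0 := Nat.cast_ne_zero.2 k.factorial_ne_zero
    have hc3 : (Nat.factorial (n-2*k) : ℚ) ≠ 0 := Nat.cast_ne_zero.2 (n-2*k).factorial_ne_zero
    field_simp
    ring
    rw [← mul_pow]; norm_num
  · rw [if_neg (by omega), if_neg h2, zero_div]

lemma hterm_zero_of_gt {n k : ℕ} (h : n < 2*k) : hterm n k = 0 := if_neg (by omega)

lemma gseq_ext (n N : ℕ) (h : n+1 ≤ N) : gseq n = ∑ k ∈ Finset.range N, hterm n k := by
  unfold gseq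
  apply Finset.sum_subset (Finset.range_subset_range.2 h)
  intro k _ hk
  simp only [Finset.mem_range] at hk
  exact hterm_zero_of_gt (by omega)

lemma hterm_rec (n k : ℕ) :
    (n+2 : ℚ) * hterm (n+2) (k+1) = hterm (n+1) (k+1) + hterm n k := by
  unfold hterm
  by_cases h3 : 2*k ≤ n
  · by_cases h2 : 2*k + 1 ≤ n
    · obtain ⟨j, hj⟩ : ∃ j, n = 2*k + 1 + j := ⟨n - 2*k - 1, by omega⟩
      subst hj
      rw [if_pos (by omega), if_pos (by omega), if_pos (by omega)]
      rw [show 2*k+1+j+2-2*(k+1) = j+1 by omega, show 2*k+1+j+1-2*(k+1) = j by omega,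
        show 2*k+1+j-2*k = j+1 by omega]
      rw [Nat.factorial_succ j, pow_succ, Nat.factorial_succ k]
      have hc1 : ((2:ℚ)^k) ≠ 0 := pow_ne_zero _ (by norm_num)
      have hc2 : (Nat.factorial k : ℚ) ≠ 0 := Nat.cast_ne_zero.2 k.factorial_ne_zero
      have hc3 : (Nat.factorial j : ℚ) ≠ 0 := Nat.cast_ne_zero.2 j.factorial_ne_zero
      push_cast
      field_simp
      ring
    · have hn : n = 2*k := by omega
      subst hn
      rw [if_pos (by omega), if_neg (by omega), if_pos (by omega)]
      rw [show 2*k+2-2*(k+1) = 0 by omega, show 2*k-2*k = 0 by omega, Nat.factorial_zero]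
      rw [pow_succ, Nat.factorial_succ k]
      have hc1 : ((2:ℚ)^k) ≠ 0 := pow_ne_zero _ (by norm_num)
      have hc2 : (Nat.factorial k : ℚ) ≠ 0 := Nat.cast_ne_zero.2 k.factorial_ne_zero
      push_cast
      field_simp
      ring
  · rw [if_neg (by omega), if_neg (by omega), if_neg (by omega)]
    simp

lemma gseq_rec (n : ℕ) : (n+2 : ℚ) * gseq (n+2) = gseq (n+1) + gseq n := by
  rw [gseq_ext (n+1) (n+3) (by omega), gseq_ext n (n+2) (by omega),
    gseq_ext (n+2) (n+3) (by omega), Finset.mul_sum]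
  rw [Finset.sum_range_succ' _ (n+2)]
  rw [Finset.sum_range_succ' _ (n+2)]
  have h0 : (n+2:ℚ) * hterm (n+2) 0 = hterm (n+1) 0 := by
    unfold hterm
    rw [if_pos (by omega), if_pos (by omega)]
    rw [show (n+2)-2*0 = (n+1)+1 by omega, show (n+1)-2*0 = n+1 by omega, Nat.factorial_succ]
    simp only [pow_zero, Nat.factorial_zero, one_mul]
    have hc : ((n+1).factorial : ℚ) ≠ 0 := Nat.cast_ne_zero.2 (Nat.factorial_ne_zero _)
    push_cast
    field_simp
    ring
  have hsum : ∑ k ∈ Finset.range (n+2), (n+2:ℚ) * hterm (n+2) (k+1)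
      = ∑ k ∈ Finset.range (n+2), (hterm (n+1) (k+1) + hterm n k) :=
    Finset.sum_congr rfl (fun k _ => hterm_rec n k)
  rw [hsum, Finset.sum_add_distrib, h0]
  ring

lemma gseq_zero : gseq 0 = 1 := by
  unfold gseq hterm
  rw [Finset.sum_range_one, if_pos (by omega)]
  norm_num

lemma gseq_one : gseq 1 = 1 := by
  unfold gseq hterm
  rw [Finset.sum_range_succ, Finset.sum_range_one, if_pos (by omega), if_neg (by omega)]
  norm_num

lemma invol_gseq (n : ℕ) : (invol n : ℚ) = (Nat.factorial n : ℚ) * gseq n := by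
  induction n using Nat.strong_induction_on with
  | _ n ih =>
    match n with
    | 0 => rw [gseq_zero]; simp [invol]
    | 1 => rw [gseq_one]; simp [invol]
    | (m+2) =>
      have h1 := ih (m+1) (by omega)
      have h0 := ih m (by omega)
      have hrec := gseq_rec m
      show ((invol (m+1) + (m+1) * invol m : ℕ) : ℚ) = _
      push_cast
      rw [h1, h0]
      rw [show ((m+2).factorial : ℚ) = ((m:ℚ)+2) * (((m:ℚ)+1) * (Nat.factorial m : ℚ)) by
        rw [Nat.factorial_succ, Nat.factorial_succ]; push_cast; ring]
      rw [show ((m+1).factorial : ℚ) = ((m:ℚ)+1) * (Nat.factorial m : ℚ) by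
        rw [Nat.factorial_succ]; push_cast; ring]
      linear_combination (-((m:ℚ)+1) * (Nat.factorial m : ℚ)) * hrec

/-- The exponential generating function for the number of permutations of `[n]`
avoiding both generalized patterns `12-3` and `21-3` is `e^{x + x²/2}`. -/
theorem a12_21_3_egf :
    (PowerSeries.mk fun n => (a12_21_3 n : ℚ) / (Nat.factorial n)) =
      psExp ((PowerSeries.X : PowerSeries ℚ) +
        (2 : ℚ)⁻¹ • (PowerSeries.X : PowerSeries ℚ) ^ 2) := by
  apply PowerSeries.ext
  intro n
  rw [PowerSeries.coeff_mk, coeff_psExp_eq, a_eq_invol, invol_gseq]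
  have hf : (Nat.factorial n : ℚ) ≠ 0 := Nat.cast_ne_zero.2 (Nat.factorial_ne_zero _)
  rw [mul_comm, mul_div_assoc, div_self hf, mul_one]
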